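/- Under hypotheses H1–H2 (and with σ₁ = (∂F₁/∂I)(S⁰, 0) well defined), system (3) admits a single-strain-1 equilibrium, i.e. a triple (S̄, V̄₁, Ī₁) with S̄, V̄₁, Ī₁ > 0 satisfying Λ − F₁(S̄, Ī₁) − λS̄ = 0, rS̄ − μV̄₁ = 0 and F₁(S̄, Ī₁) − α₁Ī₁ = 0, if and only if R₁ > 1; moreover, when it exists this equilibrium is unique. -/

import Mathlib

/-- Theorem 4.5(1): under H1–H2, system (3) admits a single-strain-1
equilibrium iff R₁ = σ₁/α₁ > 1, where σ₁ = ∂F₁/∂I(S⁰,0); moreover it is unique. -/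
theorem strain1_equilibrium_exists_iff
    (Λ r μ k α₁ α₂ lam : ℝ)
    (hΛ : 0 < Λ) (hr : 0 < r) (hμ : 0 < μ) (hk : 0 < k)
    (hα₁ : μ < α₁) (hα₂ : μ < α₂) (hlam : lam = r + μ)
    (F₁ F₂ f₁ f₂ F₁S F₁I F₂S F₂I f₁S f₁I f₂S f₂I : ℝ → ℝ → ℝ)
    (hF₁nn : ∀ S I : ℝ, 0 ≤ S → 0 ≤ I → 0 ≤ F₁ S I)
    (hF₂nn : ∀ S I : ℝ, 0 ≤ S → 0 ≤ I → 0 ≤ F₂ S I)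
    (hF₁C1 : ContDiffOn ℝ 1 (fun p : ℝ × ℝ => F₁ p.1 p.2) {p : ℝ × ℝ | 0 ≤ p.1 ∧ 0 ≤ p.2})
    (hF₂C1 : ContDiffOn ℝ 1 (fun p : ℝ × ℝ => F₂ p.1 p.2) {p : ℝ × ℝ | 0 ≤ p.1 ∧ 0 ≤ p.2})
    (hf₁C1 : ContDiffOn ℝ 1 (fun p : ℝ × ℝ => f₁ p.1 p.2) {p : ℝ × ℝ | 0 ≤ p.1 ∧ 0 ≤ p.2})
    (hf₂C1 : ContDiffOn ℝ 1 (fun p : ℝ × ℝ => f₂ p.1 p.2) {p : ℝ × ℝ | 0 ≤ p.1 ∧ 0 ≤ p.2})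
    (hH1₁ : ∀ S I : ℝ, F₁ S I = I * f₁ S I)
    (hH1₂ : ∀ S I : ℝ, F₂ S I = I * f₂ S I)
    (hF₁zero : ∀ S I : ℝ, 0 ≤ S → 0 ≤ I → F₁ 0 I = 0 ∧ F₁ S 0 = 0)
    (hF₂zero : ∀ S I : ℝ, 0 ≤ S → 0 ≤ I → F₂ 0 I = 0 ∧ F₂ S 0 = 0)
    (hdF₁S : ∀ S I : ℝ, 0 ≤ S → 0 ≤ I → HasDerivAt (fun x => F₁ x I) (F₁S S I) S)
    (hdF₁I : ∀ S I : ℝ, 0 ≤ S → 0 ≤ I → HasDerivAt (fun y => F₁ S y) (F₁I S I) I)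
    (hdF₂S : ∀ S I : ℝ, 0 ≤ S → 0 ≤ I → HasDerivAt (fun x => F₂ x I) (F₂S S I) S)
    (hdF₂I : ∀ S I : ℝ, 0 ≤ S → 0 ≤ I → HasDerivAt (fun y => F₂ S y) (F₂I S I) I)
    (hdf₁S : ∀ S I : ℝ, 0 ≤ S → 0 ≤ I → HasDerivAt (fun x => f₁ x I) (f₁S S I) S)
    (hdf₁I : ∀ S I : ℝ, 0 ≤ S → 0 ≤ I → HasDerivAt (fun y => f₁ S y) (f₁I S I) I)
    (hdf₂S : ∀ S I : ℝ, 0 ≤ S → 0 ≤ I → HasDerivAt (fun x => f₂ x I) (f₂S S I) S)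
    (hdf₂I : ∀ S I : ℝ, 0 ≤ S → 0 ≤ I → HasDerivAt (fun y => f₂ S y) (f₂I S I) I)
    (hH2f₁S : ∀ S I : ℝ, 0 ≤ S → 0 ≤ I → 0 < f₁S S I)
    (hH2f₁I : ∀ S I : ℝ, 0 ≤ S → 0 ≤ I → f₁I S I ≤ 0)
    (hH2f₂S : ∀ S I : ℝ, 0 ≤ S → 0 ≤ I → 0 < f₂S S I)
    (hH2f₂I : ∀ S I : ℝ, 0 ≤ S → 0 ≤ I → f₂I S I ≤ 0)
    (R₁ : ℝ) (hR₁ : R₁ = F₁I (Λ / lam) 0 / α₁) :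
    ((∃ Sb Vb Ib : ℝ, 0 < Sb ∧ 0 < Vb ∧ 0 < Ib ∧
        Λ - F₁ Sb Ib - lam * Sb = 0 ∧ r * Sb - μ * Vb = 0 ∧
        F₁ Sb Ib - α₁ * Ib = 0) ↔ 1 < R₁) ∧
    (∀ Sb Vb Ib Sb' Vb' Ib' : ℝ,
      (0 < Sb ∧ 0 < Vb ∧ 0 < Ib ∧ Λ - F₁ Sb Ib - lam * Sb = 0 ∧
        r * Sb - μ * Vb = 0 ∧ F₁ Sb Ib - α₁ * Ib = 0) →
      (0 < Sb' ∧ 0 < Vb' ∧ 0 < Ib' ∧ Λ - F₁ Sb' Ib' - lam * Sb' = 0 ∧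
        r * Sb' - μ * Vb' = 0 ∧ F₁ Sb' Ib' - α₁ * Ib' = 0) →
      Sb = Sb' ∧ Vb = Vb' ∧ Ib = Ib') := by
  have hα₁pos : 0 < α₁ := hμ.trans hα₁
  have hlamp : 0 < lam := by rw [hlam]; positivity
  set S0 : ℝ := Λ / lam with hS0def
  have hS0pos : 0 < S0 := div_pos hΛ hlamp
  set b : ℝ := Λ / α₁ with hbdef
  have hbpos : 0 < b := div_pos hΛ hα₁pos
  set Sof : ℝ → ℝ := fun I => (Λ - α₁ * I) / lam with hSof
  set φ : ℝ → ℝ := fun I => f₁ (Sof I) I with hφdef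
  have mono_S : ∀ I : ℝ, 0 ≤ I → StrictMonoOn (fun S => f₁ S I) (Set.Ici 0) := by
    intro I hI
    apply strictMonoOn_of_deriv_pos (convex_Ici 0)
    · intro x hx
      exact (hdf₁S x I hx hI).continuousAt.continuousWithinAt
    · intro x hx
      rw [interior_Ici] at hx
      rw [(hdf₁S x I hx.le hI).deriv]
      exact hH2f₁S x I hx.le hI
  have anti_I : ∀ S : ℝ, 0 ≤ S → AntitoneOn (fun I => f₁ S I) (Set.Ici 0) := by
    intro S hS
    apply antitoneOn_of_deriv_nonpos (convex_Ici 0)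
    · intro x hx
      exact (hdf₁I S x hS hx).continuousAt.continuousWithinAt
    · intro x hx
      rw [interior_Ici] at hx
      exact (hdf₁I S x hS hx.le).differentiableAt.differentiableWithinAt
    · intro x hx
      rw [interior_Ici] at hx
      rw [(hdf₁I S x hS hx.le).deriv]
      exact hH2f₁I S x hS hx.le
  have f₁zero : ∀ I : ℝ, 0 < I → f₁ 0 I = 0 := by
    intro I hI
    have h := (hF₁zero 0 I le_rfl hI.le).1
    rw [hH1₁] at h
    rcases mul_eq_zero.mp h with h' | h'
    · exact absurd h' (ne_of_gt hI)
    · exact h'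
  have hSofnn : ∀ I : ℝ, I ≤ b → 0 ≤ Sof I := by
    intro I hI
    have : α₁ * I ≤ Λ := by
      rw [hbdef, le_div_iff₀ hα₁pos] at hI
      nlinarith
    exact div_nonneg (by linarith) hlamp.le
  have hSofb : Sof b = 0 := by
    simp only [hSof, hbdef]
    field_simp
    ring
  have hφb : φ b = 0 := by
    simp only [hφdef, hSofb]
    exact f₁zero b hbpos
  have hSof0 : Sof 0 = S0 := by simp [hSof, hS0def]
  have φanti : ∀ I I' : ℝ, 0 ≤ I → I < I' → I' ≤ b → φ I' < φ I := by
    intro I I' hI hII' hI'b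
    have hI' : 0 ≤ I' := hI.trans hII'.le
    have hS'nn : 0 ≤ Sof I' := hSofnn I' hI'b
    have hSnn : 0 ≤ Sof I := hSofnn I (le_trans hII'.le hI'b)
    have hSS' : Sof I' < Sof I := by
      simp only [hSof]
      rw [div_lt_div_iff₀ hlamp hlamp]
      nlinarith [mul_pos (mul_pos hα₁pos (sub_pos.mpr hII')) hlamp]
    calc φ I' = f₁ (Sof I') I' := rfl
      _ ≤ f₁ (Sof I') I := anti_I (Sof I') hS'nn (Set.mem_Ici.mpr hI) (Set.mem_Ici.mpr hI') hII'.le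
      _ < f₁ (Sof I) I := mono_S I hI (Set.mem_Ici.mpr hS'nn) (Set.mem_Ici.mpr hSnn) hSS'
  have φcont : ContinuousOn φ (Set.Icc 0 b) := by
    have hc : ContinuousOn (fun p : ℝ × ℝ => f₁ p.1 p.2) {p : ℝ × ℝ | 0 ≤ p.1 ∧ 0 ≤ p.2} :=
      hf₁C1.continuousOn
    have hinner : Continuous (fun I : ℝ => (Sof I, I)) := by
      apply Continuous.prodMk
      · exact (continuous_const.sub (continuous_const.mul continuous_id)).div_const lam
      · exact continuous_id
    apply hc.comp hinner.continuousOn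
    intro I hI
    exact ⟨hSofnn I hI.2, hI.1⟩
  have hσ : F₁I S0 0 = f₁ S0 0 := by
    have h1 : HasDerivAt (fun y => F₁ S0 y) (f₁ S0 0) 0 := by
      have heq : (fun y => F₁ S0 y) = fun y => y * f₁ S0 y := funext fun y => hH1₁ S0 y
      rw [heq]
      have h2 := (hasDerivAt_id (0 : ℝ)).mul (hdf₁I S0 0 hS0pos.le le_rfl)
      simpa [Pi.mul_def] using h2
    exact (hdF₁I S0 0 hS0pos.le le_rfl).unique h1
  -- derive the key facts of any positive equilibrium
  have derive : ∀ Sb Vb Ib : ℝ, 0 < Sb → 0 < Vb → 0 < Ib →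
      Λ - F₁ Sb Ib - lam * Sb = 0 → r * Sb - μ * Vb = 0 → F₁ Sb Ib - α₁ * Ib = 0 →
      Sb = Sof Ib ∧ φ Ib = α₁ ∧ Ib < b ∧ Vb = r * Sb / μ := by
    intro Sb Vb Ib hSb hVb hIb e1 e2 e3
    have hls : lam * Sb = Λ - α₁ * Ib := by linarith
    have hSbI : Sb = Sof Ib := by
      simp only [hSof]
      rw [eq_div_iff hlamp.ne']
      linear_combination hls
    have hfeq : f₁ Sb Ib = α₁ := by
      have h := e3
      rw [hH1₁] at h
      have h2 : Ib * f₁ Sb Ib = Ib * α₁ := by linarith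
      exact mul_left_cancel₀ (ne_of_gt hIb) h2
    have hIbb : Ib < b := by
      rw [hbdef, lt_div_iff₀ hα₁pos]
      nlinarith [mul_pos hlamp hSb]
    refine ⟨hSbI, ?_, hIbb, ?_⟩
    · simp only [hφdef]
      rw [← hSbI]
      exact hfeq
    · rw [eq_div_iff hμ.ne']
      linarith
  constructor
  · constructor
    · rintro ⟨Sb, Vb, Ib, hSb, hVb, hIb, e1, e2, e3⟩
      obtain ⟨hSbI, hφIb, hIbb, hVbeq⟩ := derive Sb Vb Ib hSb hVb hIb e1 e2 e3
      have hlt : φ Ib < φ 0 := φanti 0 Ib le_rfl hIb hIbb.le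
      have hφ0 : α₁ < φ 0 := by rw [← hφIb]; exact hlt
      rw [hR₁, hσ, lt_div_iff₀ hα₁pos, one_mul]
      have : φ 0 = f₁ S0 0 := by simp only [hφdef, hSof0]
      linarith [this ▸ hφ0]
    · intro hR
      have hφ0 : α₁ < φ 0 := by
        rw [hR₁, hσ, lt_div_iff₀ hα₁pos, one_mul] at hR
        have : φ 0 = f₁ S0 0 := by simp only [hφdef, hSof0]
        linarith
      have hmem : α₁ ∈ Set.Icc (φ b) (φ 0) := ⟨by rw [hφb]; exact hα₁pos.le, hφ0.le⟩
      obtain ⟨I, hIicc, hφI⟩ := intermediate_value_Icc' hbpos.le φcont hmem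
      have hIpos : 0 < I := by
        rcases lt_or_eq_of_le hIicc.1 with h | h
        · exact h
        · exfalso; rw [← h] at hφI; exact absurd hφI (ne_of_gt hφ0)
      have hIltb : I < b := by
        rcases lt_or_eq_of_le hIicc.2 with h | h
        · exact h
        · exfalso; rw [h, hφb] at hφI; exact absurd hφI.symm (ne_of_gt hα₁pos)
      have hSpos : 0 < Sof I := by
        have : α₁ * I < Λ := by
          rw [hbdef, lt_div_iff₀ hα₁pos] at hIltb
          nlinarith
        simp only [hSof]
        exact div_pos (by linarith) hlamp
      have hfI : f₁ (Sof I) I = α₁ := hφI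
      refine ⟨Sof I, r * Sof I / μ, I, hSpos, by positivity, hIpos, ?_, ?_, ?_⟩
      · rw [hH1₁, hfI]
        simp only [hSof]
        field_simp
        ring
      · field_simp
        ring
      · rw [hH1₁, hfI]
        ring
  · rintro Sb Vb Ib Sb' Vb' Ib' ⟨hSb, hVb, hIb, e1, e2, e3⟩ ⟨hSb', hVb', hIb', e1', e2', e3'⟩
    obtain ⟨hS1, hφ1, hb1, hV1⟩ := derive Sb Vb Ib hSb hVb hIb e1 e2 e3
    obtain ⟨hS2, hφ2, hb2, hV2⟩ := derive Sb' Vb' Ib' hSb' hVb' hIb' e1' e2' e3'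
    have hII : Ib = Ib' := by
      rcases lt_trichotomy Ib Ib' with h | h | h
      · exfalso
        have := φanti Ib Ib' hIb.le h hb2.le
        rw [hφ1, hφ2] at this
        exact lt_irrefl _ this
      · exact h
      · exfalso
        have := φanti Ib' Ib hIb'.le h hb1.le
        rw [hφ1, hφ2] at this
        exact lt_irrefl _ this
    have hSS : Sb = Sb' := by rw [hS1, hS2, hII]
    exact ⟨hSS, by rw [hV1, hV2, hSS], hII⟩
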